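/- If (G, ·) is a group, θ an automorphism of G, and b ∈ G with θ(b) = b and θ^(n-1)(x) = b·x·b⁻¹ for all x ∈ G, then the n-ary operation f(x₁,...,xₙ) = x₁·θ(x₂)·θ²(x₃)···θ^(n-1)(xₙ)·b is associative, i.e., for all 1 ≤ i < j ≤ n, f(x₁,...,x_{i-1}, f(x_i,...,x_{i+n-1}), x_{i+n},...,x_{2n-1}) = f(x₁,...,x_{j-1}, f(x_j,...,x_{j+n-1}), x_{j+n},...,x_{2n-1}). -/

import Mathlib

/-- The `(θ,b)`-derived `n`-ary operation on a group `G`: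
`f(x₁,…,xₙ) = x₁·θ(x₂)·θ²(x₃)···θ^(n-1)(xₙ)·b`. -/
def derOp {G : Type*} [Group G] (n : ℕ) (θ : MulAut G) (b : G) (x : Fin n → G) : G :=
  (List.ofFn fun i : Fin n => (θ ^ (i : ℕ)) (x i)).prod * b

section Aux

variable {G : Type*} [Group G]

/-- Product of a segment: `∏_{k<l} θ^(a+k) (g k)`. -/
def segProd (θ : MulAut G) (a l : ℕ) (g : ℕ → G) : G :=
  ((List.range l).map fun k => (θ ^ (a + k)) (g k)).prod

lemma segProd_congr (θ : MulAut G) {a l : ℕ} {g g' : ℕ → G}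
    (h : ∀ k < l, g k = g' k) : segProd θ a l g = segProd θ a l g' := by
  unfold segProd
  congr 1
  apply List.map_congr_left
  intro k hk
  rw [h k (List.mem_range.mp hk)]

lemma segProd_succ (θ : MulAut G) (a l : ℕ) (g : ℕ → G) :
    segProd θ a (l + 1) g = segProd θ a l g * (θ ^ (a + l)) (g l) := by
  unfold segProd
  rw [List.range_succ, List.map_append, List.prod_append]
  simp

lemma segProd_one (θ : MulAut G) (a : ℕ) (g : ℕ → G) :
    segProd θ a 1 g = (θ ^ a) (g 0) := by
  rw [show (1:ℕ) = 0 + 1 from rfl, segProd_succ]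
  simp [segProd]

lemma segProd_add (θ : MulAut G) (a l₁ l₂ : ℕ) (g : ℕ → G) :
    segProd θ a (l₁ + l₂) g
      = segProd θ a l₁ g * segProd θ (a + l₁) l₂ (fun k => g (l₁ + k)) := by
  induction l₂ with
  | zero => simp [segProd]
  | succ l ih =>
      rw [← Nat.add_assoc, segProd_succ, segProd_succ, ih, mul_assoc]
      simp [Nat.add_assoc]

lemma pow_apply_segProd (θ : MulAut G) (c a l : ℕ) (g : ℕ → G) :
    (θ ^ c) (segProd θ a l g) = segProd θ (c + a) l g := by
  unfold segProd
  rw [map_list_prod, List.map_map]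
  congr 1
  apply List.map_congr_left
  intro k _
  simp only [Function.comp_apply]
  rw [← MulAut.mul_apply, ← pow_add, Nat.add_assoc]

lemma pow_apply_b (θ : MulAut G) (b : G) (hb : θ b = b) (c : ℕ) :
    (θ ^ c) b = b := by
  induction c with
  | zero => rfl
  | succ c ih => rw [pow_succ, MulAut.mul_apply, hb, ih]

lemma derOp_eq_segProd (n : ℕ) (θ : MulAut G) (b : G) (g : ℕ → G) :
    derOp n θ b (fun k : Fin n => g (k : ℕ)) = segProd θ 0 n g * b := by
  unfold derOp segProd
  congr 1
  rw [List.ofFn_eq_map, ← List.map_coe_finRange_eq_range, List.map_map]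
  congr 1
  apply List.map_congr_left
  intro k _
  simp

lemma b_mul_segProd (θ : MulAut G) (b : G) {d : ℕ}
    (hconj : ∀ x : G, (θ ^ d) x = b * x * b⁻¹) (a l : ℕ) (g : ℕ → G) :
    b * segProd θ a l g = segProd θ (d + a) l g * b := by
  induction l with
  | zero => simp [segProd]
  | succ l ih =>
      rw [segProd_succ, segProd_succ, ← mul_assoc, ih, mul_assoc, mul_assoc]
      congr 1
      have h := hconj ((θ ^ (a + l)) (g l))
      have h2 : b * (θ ^ (a + l)) (g l) = (θ ^ d) ((θ ^ (a + l)) (g l)) * b := by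
        rw [h]; group
      rw [h2, ← MulAut.mul_apply, ← pow_add, ← Nat.add_assoc]

end Aux

theorem derived_op_associative {G : Type*} [Group G] (n : ℕ) (hn : 2 ≤ n)
    (θ : MulAut G) (b : G) (hb : θ b = b)
    (hconj : ∀ x : G, (θ ^ (n - 1)) x = b * x * b⁻¹) :
    ∀ (x : ℕ → G) (i j : ℕ), i ≤ n - 1 → j ≤ n - 1 →
      derOp n θ b (fun k : Fin n =>
        if (k : ℕ) < i then x k
        else if (k : ℕ) = i then derOp n θ b (fun m : Fin n => x (i + (m : ℕ)))
        else x ((k : ℕ) + n - 1)) =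
      derOp n θ b (fun k : Fin n =>
        if (k : ℕ) < j then x k
        else if (k : ℕ) = j then derOp n θ b (fun m : Fin n => x (j + (m : ℕ)))
        else x ((k : ℕ) + n - 1)) := by
  intro x i j hi hj
  have key : ∀ i : ℕ, i ≤ n - 1 →
      derOp n θ b (fun k : Fin n =>
        if (k : ℕ) < i then x k
        else if (k : ℕ) = i then derOp n θ b (fun m : Fin n => x (i + (m : ℕ)))
        else x ((k : ℕ) + n - 1)) = segProd θ 0 (n + n - 1) x * b * b := by
    intro i hi
    set inner : G := derOp n θ b (fun m : Fin n => x (i + (m : ℕ))) with hinner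
    set g : ℕ → G := fun k =>
      if k < i then x k else if k = i then inner else x (k + n - 1) with hg
    have h1 : derOp n θ b (fun k : Fin n =>
        if (k : ℕ) < i then x k
        else if (k : ℕ) = i then inner
        else x ((k : ℕ) + n - 1)) = segProd θ 0 n g * b := derOp_eq_segProd n θ b g
    rw [h1]
    obtain ⟨r, hr⟩ : ∃ r, n = i + 1 + r := ⟨n - 1 - i, by omega⟩
    have hsplit : segProd θ 0 n g
        = segProd θ 0 i g * ((θ ^ i) (g i) * segProd θ (i + 1) r (fun k => g (i + (1 + k)))) := by
      rw [hr, show i + 1 + r = i + (1 + r) by omega, segProd_add, segProd_add]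
      simp only [Nat.zero_add, Nat.add_zero, segProd_one, mul_assoc]
    have e1 : segProd θ 0 i g = segProd θ 0 i x := by
      apply segProd_congr
      intro k hk
      simp [hg, hk]
    have e2 : (θ ^ i) (g i) = segProd θ i n (fun m => x (i + m)) * b := by
      have : g i = inner := by simp [hg]
      rw [this, hinner, derOp_eq_segProd n θ b (fun m => x (i + m)), map_mul,
        pow_apply_segProd, pow_apply_b θ b hb, Nat.add_zero]
    have e3 : segProd θ (i + 1) r (fun k => g (i + (1 + k)))
        = segProd θ (i + 1) r (fun k => x (i + n + k)) := by
      apply segProd_congr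
      intro k _
      have h₁ : ¬ (i + (1 + k) < i) := by omega
      have h₂ : ¬ (i + (1 + k) = i) := by omega
      simp only [hg, h₁, h₂, if_false]
      congr 1
      omega
    rw [hsplit, e1, e2, e3, mul_assoc (segProd θ i n fun m => x (i + m)) b _,
      b_mul_segProd θ b hconj]
    have harith : n - 1 + (i + 1) = i + n := by omega
    rw [harith]
    have e4 : segProd θ 0 i x * (segProd θ i n (fun m => x (i + m)) *
        (segProd θ (i + n) r (fun k => x (i + n + k)) * b)) = segProd θ 0 (n + n - 1) x * b := by
      rw [show (segProd θ 0 i x * (segProd θ i n (fun m => x (i + m)) *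
          (segProd θ (i + n) r (fun k => x (i + n + k)) * b)))
        = (segProd θ 0 i x * segProd θ i n (fun m => x (i + m)) *
          segProd θ (i + n) r (fun k => x (i + n + k))) * b by group]
      congr 1
      have s1 := segProd_add θ 0 i n x
      rw [Nat.zero_add] at s1
      have s2 := segProd_add θ 0 (i + n) r x
      rw [Nat.zero_add] at s2
      rw [← s1, ← s2, show i + n + r = n + n - 1 by omega]
    rw [← mul_assoc, ← mul_assoc] at e4 ⊢
    rw [e4]
  rw [key i hi, key j hj]
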